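/- Let L > n ≥ 1 be integers and let p, q be real parameters, and fix a position k with 1 ≤ k ≤ L−1. Then the weighted sum over configurations having an ordinary particle at distance L−k behind the tracer (equivalently at word position k) satisfies: ∑_{a : a_k = 1} w_{p,q}(a) = ∑_{j=0}^{L−n−1} ∑_{r=0}^{j} C(k−1, r) · C(L−1−k, j−r) · q^r · p^{j−r} · R(L−j−1, n−1; p, q), where the left-hand sum runs over all words a of length L−1 with entries in {0,1} having exactly n ones and a_k = 1, and C(·,·) denotes the binomial coefficient. -/

import Mathlib

open Finset

/-- The stationary weight of a word `a` with entries in `{0,1}` (encoded as `Fin 2`):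
the product over positions `i` with `a i = 0` of `1 + p·m_i(a) + q·n_i(a)`,
where `m_i(a)` (resp. `n_i(a)`) is the number of `1`'s strictly before (resp. after) `i`. -/
noncomputable def wt (p q : ℝ) {m : ℕ} (a : Fin m → Fin 2) : ℝ :=
  ∏ i ∈ univ.filter (fun i => a i = 0),
    (1 + p * ((univ.filter (fun j => j < i ∧ a j = 1)).card : ℝ)
       + q * ((univ.filter (fun j => i < j ∧ a j = 1)).card : ℝ))

/-- The number of `1`'s in the word `a`. -/
def ones {m : ℕ} (a : Fin m → Fin 2) : ℕ := (univ.filter (fun i => a i = 1)).card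

/-- The restricted partition function `R(L, n; p, q)`: the sum of the weights `wt p q a`
over all words `a` of length `L - 1` with entries in `{0,1}` having exactly `n` ones. -/
noncomputable def R (L n : ℕ) (p q : ℝ) : ℝ :=
  ∑ a ∈ univ.filter (fun a : Fin (L - 1) → Fin 2 => ones a = n), wt p q a

noncomputable def W (p q : ℝ) {m : ℕ} (U O : Finset (Fin m)) : ℝ :=
  ∏ i ∈ U \ O,
    (1 + p * ((O.filter (fun j => j < i)).card : ℝ)
       + q * ((O.filter (fun j => i < j)).card : ℝ))

lemma fin2_cases (x : Fin 2) : x = 0 ↔ ¬ x = 1 := by omega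

lemma wt_eq_W (p q : ℝ) {m : ℕ} (a : Fin m → Fin 2) :
    wt p q a = W p q univ (univ.filter (fun i => a i = 1)) := by
  unfold wt W
  have h0 : univ.filter (fun i => a i = 0) = univ \ univ.filter (fun i => a i = 1) := by
    ext i; simp [fin2_cases]
  rw [h0]
  refine Finset.prod_congr rfl fun i _ => ?_
  rw [filter_filter, filter_filter]
  have e1 : (univ.filter (fun j => j < i ∧ a j = 1)) = (univ.filter (fun j => a j = 1 ∧ j < i)) :=
    Finset.filter_congr (fun j _ => by tauto)
  have e2 : (univ.filter (fun j => i < j ∧ a j = 1)) = (univ.filter (fun j => a j = 1 ∧ i < j)) :=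
    Finset.filter_congr (fun j _ => by tauto)
  rw [e1, e2]

noncomputable def RW (m n : ℕ) (p q : ℝ) : ℝ :=
  ∑ O ∈ powersetCard n (univ : Finset (Fin m)), W p q univ O

lemma filter_indicator {m : ℕ} (O : Finset (Fin m)) :
    univ.filter (fun i => (if i ∈ O then (1 : Fin 2) else 0) = 1) = O := by
  ext i; simp only [mem_filter, mem_univ, true_and]
  by_cases h : i ∈ O <;> simp [h]

lemma sum_wt_eq_sum_W (p q : ℝ) (m n : ℕ) (P : Finset (Fin m) → Prop) [DecidablePred P] :
    ∑ a ∈ univ.filter (fun a : Fin m → Fin 2 =>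
        ones a = n ∧ P (univ.filter fun i => a i = 1)), wt p q a
    = ∑ O ∈ (powersetCard n (univ : Finset (Fin m))).filter P, W p q univ O := by
  refine Finset.sum_nbij' (fun a => univ.filter (fun i => a i = 1))
    (fun O => fun i => if i ∈ O then 1 else 0) ?_ ?_ ?_ ?_ ?_
  · intro a ha
    rw [mem_filter] at ha
    simp only [mem_filter, mem_univ, true_and, ones] at ha ⊢
    simp only [mem_powersetCard]
    exact ⟨⟨Finset.subset_univ _, ha.1⟩, ha.2⟩
  · intro O hO
    simp only [mem_filter, mem_powersetCard] at hO
    rw [mem_filter]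
    simp only [mem_filter, mem_univ, true_and, filter_indicator, ones]
    exact ⟨hO.1.2, hO.2⟩
  · intro a _
    funext i
    by_cases h : a i = 1 <;> simp [h]
    · omega
  · intro O _; exact filter_indicator O
  · intro a _; exact wt_eq_W p q a

lemma R_eq_RW (L n : ℕ) (p q : ℝ) : R L n p q = RW (L - 1) n p q := by
  have := sum_wt_eq_sum_W p q (L-1) n (fun _ => True)
  simpa [R, RW] using this

lemma RW_eq_zero {m n : ℕ} (h : m < n) (p q : ℝ) : RW m n p q = 0 := by
  unfold RW
  rw [Finset.powersetCard_eq_empty.2 (by simpa using h), Finset.sum_empty]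

-- Lemma A: expansion at a marked one
lemma W_expand (p q : ℝ) {m : ℕ} (O : Finset (Fin m)) (k0 : Fin m) (hk : k0 ∈ O) :
    W p q univ O = ∑ S ∈ (univ \ O).powerset,
      (∏ i ∈ S, (if i < k0 then q else p)) *
        W p q (univ \ insert k0 S) (O.erase k0) := by
  have hfac : ∀ i ∈ univ \ O,
      (1 + p * (((O.filter (fun j => j < i)).card : ℕ) : ℝ)
         + q * (((O.filter (fun j => i < j)).card : ℕ) : ℝ))
      = (if i < k0 then q else p) +
        (1 + p * ((((O.erase k0).filter (fun j => j < i)).card : ℕ) : ℝ)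
           + q * ((((O.erase k0).filter (fun j => i < j)).card : ℕ) : ℝ)) := by
    intro i hi
    rw [mem_sdiff] at hi
    have hik : i ≠ k0 := fun h => hi.2 (h ▸ hk)
    have hOi : O = insert k0 (O.erase k0) := (Finset.insert_erase hk).symm
    have hk0 : k0 ∉ O.erase k0 := Finset.notMem_erase _ _
    rcases lt_or_gt_of_ne hik with hlt | hgt
    · have h1 : O.filter (fun j => j < i) = (O.erase k0).filter (fun j => j < i) := by
        rw [hOi, Finset.filter_insert, if_neg (by exact fun h => absurd (h.trans hlt) (lt_irrefl _)), Finset.erase_insert hk0]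
      have h2 : O.filter (fun j => i < j) = insert k0 ((O.erase k0).filter (fun j => i < j)) := by
        rw [hOi, Finset.filter_insert, if_pos hlt, Finset.erase_insert hk0]
      rw [h1, h2, Finset.card_insert_of_notMem (fun h => hk0 (Finset.mem_filter.1 h).1),
        if_pos hlt]
      push_cast; ring
    · have h1 : O.filter (fun j => j < i) = insert k0 ((O.erase k0).filter (fun j => j < i)) := by
        rw [hOi, Finset.filter_insert, if_pos hgt, Finset.erase_insert hk0]
      have h2 : O.filter (fun j => i < j) = (O.erase k0).filter (fun j => i < j) := by
        rw [hOi, Finset.filter_insert, if_neg (by exact fun h => absurd (hgt.trans h) (lt_irrefl _)), Finset.erase_insert hk0]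
      rw [h1, h2, Finset.card_insert_of_notMem (fun h => hk0 (Finset.mem_filter.1 h).1),
        if_neg (by exact fun h => absurd (h.trans hgt) (lt_irrefl _))]
      push_cast; ring
  unfold W
  rw [Finset.prod_congr rfl hfac, Finset.prod_add]
  refine Finset.sum_congr rfl fun S hS => ?_
  rw [Finset.mem_powerset] at hS
  congr 1
  have hset : (univ \ insert k0 S) \ O.erase k0 = (univ \ O) \ S := by
    ext x
    simp only [mem_sdiff, mem_univ, true_and, mem_insert, mem_erase, not_or, not_and, ne_eq]
    constructor
    · rintro ⟨⟨hxk, hxS⟩, hOx⟩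
      exact ⟨fun hxO => (hOx (fun h => hxk h) hxO).elim, hxS⟩
    · rintro ⟨hxO, hxS⟩
      have hxk : x ≠ k0 := fun h => hxO (h ▸ hk)
      exact ⟨⟨hxk, hxS⟩, fun _ hxO' => hxO hxO'⟩
  rw [hset]

lemma card_orderIso {m s : ℕ} (U : Finset (Fin m)) (h : U.card = s) (O : Finset (Fin m)) (hO : O ⊆ U)
    (P : Fin m → Prop) [DecidablePred P] (Q : Fin s → Prop) [DecidablePred Q]
    (hQ : ∀ i, Q i ↔ P ((U.orderIsoOfFin h i : Fin m))) :
    (univ.filter (fun i => ((U.orderIsoOfFin h i : Fin m)) ∈ O ∧ Q i)).card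
      = (O.filter P).card := by
  set e := U.orderIsoOfFin h with he
  refine Finset.card_bij (fun i _ => (e i : Fin m)) ?_ ?_ ?_
  · intro i hi
    simp only [mem_filter, mem_univ, true_and] at hi
    exact Finset.mem_filter.2 ⟨hi.1, (hQ i).1 hi.2⟩
  · intro i1 h1 i2 h2 hee
    exact e.injective (Subtype.ext hee)
  · intro x hx
    rw [Finset.mem_filter] at hx
    have hxU : x ∈ U := hO hx.1
    have key : ((e (e.symm ⟨x, hxU⟩)) : Fin m) = x :=
      congrArg Subtype.val (e.apply_symm_apply ⟨x, hxU⟩)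
    refine ⟨e.symm ⟨x, hxU⟩, ?_, key⟩
    simp only [mem_filter, mem_univ, true_and]
    constructor
    · rw [key]; exact hx.1
    · rw [hQ, key]; exact hx.2

lemma W_orderIso {m s : ℕ} (U : Finset (Fin m)) (h : U.card = s) (p q : ℝ)
    (O : Finset (Fin m)) (hO : O ⊆ U) :
    W p q U O
      = W p q (univ : Finset (Fin s))
          (univ.filter (fun i => ((U.orderIsoOfFin h i : Fin m)) ∈ O)) := by
  set e := U.orderIsoOfFin h with he
  set O' := univ.filter (fun i => ((e i : Fin m)) ∈ O) with hO'
  unfold W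
  refine (Finset.prod_bij (fun (i : Fin s) (_ : i ∈ univ \ O') => (e i : Fin m)) ?_ ?_ ?_ ?_).symm
  · intro i hi
    rw [mem_sdiff] at hi ⊢
    refine ⟨(e i).2, fun hmem => hi.2 ?_⟩
    rw [hO', Finset.mem_filter]; exact ⟨mem_univ _, hmem⟩
  · intro i1 _ i2 _ hee; exact e.injective (Subtype.ext hee)
  · intro x hx
    rw [mem_sdiff] at hx
    have key : ((e (e.symm ⟨x, hx.1⟩)) : Fin m) = x :=
      congrArg Subtype.val (e.apply_symm_apply ⟨x, hx.1⟩)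
    refine ⟨e.symm ⟨x, hx.1⟩, ?_, key⟩
    rw [mem_sdiff]
    refine ⟨mem_univ _, fun hmem => hx.2 ?_⟩
    rw [hO', Finset.mem_filter] at hmem
    rw [← key]; exact hmem.2
  · intro i hi
    rw [mem_sdiff] at hi
    have hlt : ∀ (j : Fin s) (i' : Fin s), j < i' ↔ ((e j : Fin m)) < ((e i' : Fin m)) := by
      intro j i'
      rw [← e.lt_iff_lt]
      exact Iff.symm Subtype.coe_lt_coe
    have c1 : (O'.filter (fun j => j < i)).card
        = (O.filter (fun j => j < (e i : Fin m))).card := by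
      rw [hO', Finset.filter_filter]
      exact card_orderIso U h O hO _ _ (fun j => hlt j i)
    have c2 : (O'.filter (fun j => i < j)).card
        = (O.filter (fun j => (e i : Fin m) < j)).card := by
      rw [hO', Finset.filter_filter]
      exact card_orderIso U h O hO _ _ (fun j => hlt i j)
    rw [c1, c2]

lemma sum_W_powersetCard {m s : ℕ} (U : Finset (Fin m)) (h : U.card = s) (p q : ℝ) (n' : ℕ) :
    ∑ O ∈ powersetCard n' U, W p q U O = RW s n' p q := by
  set e := U.orderIsoOfFin h with he
  unfold RW
  refine Finset.sum_nbij' (fun O => univ.filter (fun i => ((e i : Fin m)) ∈ O))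
    (fun O' => O'.image (fun i => (e i : Fin m))) ?_ ?_ ?_ ?_ ?_
  · intro O hO
    rw [Finset.mem_powersetCard] at hO ⊢
    refine ⟨Finset.subset_univ _, ?_⟩
    have h2 : univ.filter (fun i => ((e i : Fin m)) ∈ O)
        = univ.filter (fun i => ((e i : Fin m)) ∈ O ∧ True) := by
      simp
    show (univ.filter (fun i => ((e i : Fin m)) ∈ O)).card = n'
    rw [h2, card_orderIso U h O hO.1 (fun _ => True) (fun _ => True) (fun _ => Iff.rfl),
      Finset.filter_true_of_mem (fun _ _ => trivial), hO.2]
  · intro O' hO'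
    rw [Finset.mem_powersetCard] at hO' ⊢
    constructor
    · intro x hx
      rw [Finset.mem_image] at hx
      obtain ⟨i, _, rfl⟩ := hx
      exact (e i).2
    · rw [Finset.card_image_of_injective _ (fun i1 i2 hee => e.injective (Subtype.ext hee))]
      exact hO'.2
  · intro O hO
    rw [Finset.mem_powersetCard] at hO
    ext x
    simp only [Finset.mem_image, Finset.mem_filter, mem_univ, true_and]
    constructor
    · rintro ⟨i, hi, rfl⟩; exact hi
    · intro hx
      have key : ((e (e.symm ⟨x, hO.1 hx⟩)) : Fin m) = x :=
        congrArg Subtype.val (e.apply_symm_apply ⟨x, hO.1 hx⟩)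
      refine ⟨e.symm ⟨x, hO.1 hx⟩, ?_, key⟩
      rw [key]; exact hx
  · intro O' _
    ext i
    simp only [Finset.mem_filter, mem_univ, true_and, Finset.mem_image]
    constructor
    · rintro ⟨j, hj, hee⟩
      rwa [← e.injective (Subtype.ext hee)]
    · intro hi; exact ⟨i, hi, rfl⟩
  · intro O hO
    rw [Finset.mem_powersetCard] at hO
    exact W_orderIso U h p q O hO.1

lemma master {m : ℕ} (k0 : Fin m) (n : ℕ) (hn : 1 ≤ n) (p q : ℝ) :
    ∑ O ∈ (powersetCard n (univ : Finset (Fin m))).filter (fun O => k0 ∈ O), W p q univ O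
    = ∑ S1 ∈ (univ.filter (fun j => j < k0)).powerset,
        ∑ S2 ∈ (univ.filter (fun j => k0 < j)).powerset,
          q ^ S1.card * p ^ S2.card * RW (m - 1 - (S1.card + S2.card)) (n - 1) p q := by
  -- Step 1: reindex by erasing k0
  have step1 : ∑ O ∈ (powersetCard n (univ : Finset (Fin m))).filter (fun O => k0 ∈ O),
        W p q univ O
      = ∑ O' ∈ powersetCard (n - 1) (univ.erase k0), W p q univ (insert k0 O') := by
    refine Finset.sum_nbij' (fun O => O.erase k0) (fun O' => insert k0 O') ?_ ?_ ?_ ?_ ?_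
    · intro O hO
      simp only [mem_filter, mem_powersetCard] at hO ⊢
      refine ⟨fun x hx => ?_, ?_⟩
      · rw [Finset.mem_erase] at hx ⊢; exact ⟨hx.1, mem_univ x⟩
      · rw [Finset.card_erase_of_mem hO.2, hO.1.2]
    · intro O' hO'
      rw [mem_powersetCard] at hO'
      have hk0 : k0 ∉ O' := fun h => (Finset.mem_erase.1 (hO'.1 h)).1 rfl
      simp only [mem_filter, mem_powersetCard]
      refine ⟨⟨Finset.subset_univ _, ?_⟩, Finset.mem_insert_self _ _⟩
      rw [Finset.card_insert_of_notMem hk0, hO'.2]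
      omega
    · intro O hO
      simp only [mem_filter] at hO
      exact Finset.insert_erase hO.2
    · intro O' hO'
      rw [mem_powersetCard] at hO'
      have hk0 : k0 ∉ O' := fun h => (Finset.mem_erase.1 (hO'.1 h)).1 rfl
      exact Finset.erase_insert hk0
    · intro O hO
      simp only [mem_filter] at hO
      rw [Finset.insert_erase hO.2]
  rw [step1]
  -- Step 2: expand each W
  have step2 : ∀ O' ∈ powersetCard (n - 1) ((univ : Finset (Fin m)).erase k0),
      W p q univ (insert k0 O')
      = ∑ S ∈ (univ \ insert k0 O').powerset,
          (∏ i ∈ S, (if i < k0 then q else p)) * W p q (univ \ insert k0 S) O' := by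
    intro O' hO'
    rw [mem_powersetCard] at hO'
    have hk0 : k0 ∉ O' := fun h => (Finset.mem_erase.1 (hO'.1 h)).1 rfl
    rw [W_expand p q (insert k0 O') k0 (Finset.mem_insert_self _ _), Finset.erase_insert hk0]
  rw [Finset.sum_congr rfl step2]
  -- Step 3: swap the two sums
  have step3 : ∑ O' ∈ powersetCard (n - 1) ((univ : Finset (Fin m)).erase k0),
        ∑ S ∈ (univ \ insert k0 O').powerset,
          (∏ i ∈ S, (if i < k0 then q else p)) * W p q (univ \ insert k0 S) O'
      = ∑ S ∈ ((univ : Finset (Fin m)).erase k0).powerset,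
          ∑ O' ∈ powersetCard (n - 1) (univ \ insert k0 S),
            (∏ i ∈ S, (if i < k0 then q else p)) * W p q (univ \ insert k0 S) O' := by
    refine Finset.sum_comm' ?_
    intro O' S
    simp only [mem_powersetCard, Finset.mem_powerset, Finset.subset_iff, mem_sdiff,
      Finset.mem_erase, Finset.mem_insert, mem_univ, true_and, not_or, and_true]
    constructor
    · rintro ⟨⟨h1, h2⟩, h3⟩
      exact ⟨⟨fun x hx => ⟨h1 hx, fun hxS => (h3 hxS).2 hx⟩, h2⟩, fun x hx => (h3 hx).1⟩
    · rintro ⟨⟨h1, h2⟩, h3⟩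
      exact ⟨⟨fun x hx => (h1 hx).1, h2⟩, fun x hx => ⟨h3 hx, fun hxO => (h1 hxO).2 hx⟩⟩
  rw [step3]
  -- Step 4: evaluate inner sum via transport
  have step4 : ∀ S ∈ ((univ : Finset (Fin m)).erase k0).powerset,
      ∑ O' ∈ powersetCard (n - 1) (univ \ insert k0 S),
          (∏ i ∈ S, (if i < k0 then q else p)) * W p q (univ \ insert k0 S) O'
      = (∏ i ∈ S, (if i < k0 then q else p)) * RW (m - 1 - S.card) (n - 1) p q := by
    intro S hS
    rw [Finset.mem_powerset] at hS
    have hk0S : k0 ∉ S := fun h => (Finset.mem_erase.1 (hS h)).1 rfl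
    have hcard : (univ \ insert k0 S).card = m - 1 - S.card := by
      rw [Finset.card_sdiff_of_subset (Finset.subset_univ _), Finset.card_insert_of_notMem hk0S,
        Finset.card_univ, Fintype.card_fin]
      omega
    rw [← Finset.mul_sum, sum_W_powersetCard (univ \ insert k0 S) hcard]
  rw [Finset.sum_congr rfl step4]
  -- Step 5: split S into left and right parts
  rw [← Finset.sum_product']
  refine Finset.sum_nbij' (fun S => (S.filter (fun j => j < k0), S.filter (fun j => k0 < j)))
    (fun P => P.1 ∪ P.2) ?_ ?_ ?_ ?_ ?_
  · intro S hS
    rw [Finset.mem_powerset] at hS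
    rw [Finset.mem_product]
    constructor <;> · rw [Finset.mem_powerset]; intro x hx
                      rw [Finset.mem_filter] at hx ⊢
                      exact ⟨mem_univ x, hx.2⟩
  · intro P hP
    rw [Finset.mem_product, Finset.mem_powerset, Finset.mem_powerset] at hP
    rw [Finset.mem_powerset]
    intro x hx
    rw [Finset.mem_union] at hx
    rw [Finset.mem_erase]
    rcases hx with hx | hx
    · have := Finset.mem_filter.1 (hP.1 hx)
      exact ⟨ne_of_lt this.2, mem_univ x⟩
    · have := Finset.mem_filter.1 (hP.2 hx)
      exact ⟨ne_of_gt this.2, mem_univ x⟩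
  · intro S hS
    rw [Finset.mem_powerset] at hS
    ext x
    simp only [Finset.mem_union, Finset.mem_filter]
    constructor
    · rintro (⟨h1, _⟩ | ⟨h1, _⟩) <;> exact h1
    · intro hx
      have hxk : x ≠ k0 := (Finset.mem_erase.1 (hS hx)).1
      rcases lt_or_gt_of_ne hxk with h | h
      · exact Or.inl ⟨hx, h⟩
      · exact Or.inr ⟨hx, h⟩
  · intro P hP
    rw [Finset.mem_product, Finset.mem_powerset, Finset.mem_powerset] at hP
    have e1 : (P.1 ∪ P.2).filter (fun j => j < k0) = P.1 := by
      ext x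
      simp only [Finset.mem_filter, Finset.mem_union]
      constructor
      · rintro ⟨hx | hx, hlt⟩
        · exact hx
        · exact absurd hlt (asymm (Finset.mem_filter.1 (hP.2 hx)).2)
      · intro hx; exact ⟨Or.inl hx, (Finset.mem_filter.1 (hP.1 hx)).2⟩
    have e2 : (P.1 ∪ P.2).filter (fun j => k0 < j) = P.2 := by
      ext x
      simp only [Finset.mem_filter, Finset.mem_union]
      constructor
      · rintro ⟨hx | hx, hlt⟩
        · exact absurd hlt (asymm (Finset.mem_filter.1 (hP.1 hx)).2)
        · exact hx
      · intro hx; exact ⟨Or.inr hx, (Finset.mem_filter.1 (hP.2 hx)).2⟩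
    rw [e1, e2]
  · intro S hS
    rw [Finset.mem_powerset] at hS
    have hdisj : Disjoint (S.filter (fun j => j < k0)) (S.filter (fun j => k0 < j)) := by
      rw [Finset.disjoint_left]
      intro x hx1 hx2
      exact asymm (Finset.mem_filter.1 hx1).2 (Finset.mem_filter.1 hx2).2
    have hsplit : S = S.filter (fun j => j < k0) ∪ S.filter (fun j => k0 < j) := by
      ext x
      simp only [Finset.mem_union, Finset.mem_filter]
      constructor
      · intro hx
        have hxk : x ≠ k0 := (Finset.mem_erase.1 (hS hx)).1
        rcases lt_or_gt_of_ne hxk with h | h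
        · exact Or.inl ⟨hx, h⟩
        · exact Or.inr ⟨hx, h⟩
      · rintro (⟨h1, _⟩ | ⟨h1, _⟩) <;> exact h1
    have hprod : ∏ i ∈ S, (if i < k0 then q else p)
        = q ^ (S.filter (fun j => j < k0)).card * p ^ (S.filter (fun j => k0 < j)).card := by
      conv_lhs => rw [hsplit]
      rw [Finset.prod_union hdisj]
      congr 1
      · exact (Finset.prod_congr rfl (fun i hi =>
          if_pos (Finset.mem_filter.1 hi).2)).trans (Finset.prod_const q)
      · exact (Finset.prod_congr rfl (fun i hi =>
          if_neg (asymm (Finset.mem_filter.1 hi).2))).trans (Finset.prod_const p)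
    have hcard : S.card = (S.filter (fun j => j < k0)).card + (S.filter (fun j => k0 < j)).card := by
      conv_lhs => rw [hsplit]
      exact Finset.card_union_of_disjoint hdisj
    rw [hprod, hcard]

lemma triangle_sum (N : ℕ) (F : ℕ → ℕ → ℝ) (hF : ∀ r s, N ≤ r + s → F r s = 0) :
    ∑ r ∈ Finset.range N, ∑ s ∈ Finset.range N, F r s
      = ∑ j ∈ Finset.range N, ∑ r ∈ Finset.range (j + 1), F r (j - r) := by
  rw [← Finset.sum_product', Finset.sum_sigma']
  have h1 : ∑ x ∈ Finset.range N ×ˢ Finset.range N, F x.1 x.2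
      = ∑ x ∈ (Finset.range N ×ˢ Finset.range N).filter (fun x => x.1 + x.2 < N),
          F x.1 x.2 := by
    refine (Finset.sum_subset (Finset.filter_subset _ _) ?_).symm
    intro x hx hnx
    rw [Finset.mem_filter] at hnx
    exact hF _ _ (by push_neg at hnx; exact hnx (by tauto))
  rw [h1]
  refine Finset.sum_nbij' (fun x => ⟨x.1 + x.2, x.1⟩) (fun y => (y.2, y.1 - y.2)) ?_ ?_ ?_ ?_ ?_
  · intro x hx
    simp only [Finset.mem_filter, Finset.mem_product, Finset.mem_range] at hx
    simp only [Finset.mem_sigma, Finset.mem_range]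
    omega
  · intro y hy
    simp only [Finset.mem_sigma, Finset.mem_range] at hy
    simp only [Finset.mem_filter, Finset.mem_product, Finset.mem_range]
    omega
  · intro x hx
    simp only [Finset.mem_filter, Finset.mem_product, Finset.mem_range] at hx
    have : x.1 + x.2 - x.1 = x.2 := by omega
    simp [this]
  · intro y hy
    simp only [Finset.mem_sigma, Finset.mem_range] at hy
    obtain ⟨j, r⟩ := y
    simp only at hy ⊢
    have : r + (j - r) = j := by omega
    simp [this]
  · intro x hx
    dsimp only
    exact congrArg (F x.1) (by omega)


/-- the weighted sum over configurations having an ordinary particle at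
distance `L - k` behind the tracer (word position `k`, i.e. index `k - 1`). -/
theorem density_behind (L n k : ℕ) (hn1 : 1 ≤ n) (hnL : n < L) (hk1 : 1 ≤ k)
    (hk2 : k ≤ L - 1) (p q : ℝ) :
    (∑ a ∈ univ.filter (fun a : Fin (L - 1) → Fin 2 =>
        ones a = n ∧ a ⟨k - 1, by omega⟩ = 1), wt p q a)
    = ∑ j ∈ Finset.range (L - n), ∑ r ∈ Finset.range (j + 1),
        (Nat.choose (k - 1) r : ℝ) * (Nat.choose (L - 1 - k) (j - r) : ℝ)
          * q ^ r * p ^ (j - r) * R (L - j - 1) (n - 1) p q := by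
  have hkL : k - 1 < L - 1 := by omega
  set k0 : Fin (L - 1) := ⟨k - 1, hkL⟩ with hk0def
  have ha : (univ.filter (fun a : Fin (L - 1) → Fin 2 =>
        ones a = n ∧ a ⟨k - 1, by omega⟩ = 1))
      = univ.filter (fun a : Fin (L - 1) → Fin 2 =>
        ones a = n ∧ k0 ∈ univ.filter (fun i => a i = 1)) := by
    apply Finset.filter_congr
    intro a _
    simp [hk0def]
  rw [ha, sum_wt_eq_sum_W p q (L - 1) n (fun O => k0 ∈ O), master k0 n hn1 p q]
  -- cardinalities of the left and right segments
  have hc1 : ((univ : Finset (Fin (L - 1))).filter (fun j => j < k0)).card = k - 1 := by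
    have : (univ : Finset (Fin (L - 1))).filter (fun j => j < k0) = Finset.Iio k0 := by
      ext x; simp
    rw [this, Fin.card_Iio]
  have hc2 : ((univ : Finset (Fin (L - 1))).filter (fun j => k0 < j)).card = L - 1 - k := by
    have : (univ : Finset (Fin (L - 1))).filter (fun j => k0 < j) = Finset.Ioi k0 := by
      ext x; simp
    rw [this, Fin.card_Ioi]
    simp only [hk0def]
    omega
  have hin : ∀ S1 : Finset (Fin (L - 1)),
      ∑ S2 ∈ ((univ : Finset (Fin (L - 1))).filter (fun j => k0 < j)).powerset,
          q ^ S1.card * p ^ S2.card * RW (L - 1 - 1 - (S1.card + S2.card)) (n - 1) p q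
      = ∑ s ∈ Finset.range (L - 1 - k + 1), (L - 1 - k).choose s •
          (q ^ S1.card * p ^ s * RW (L - 1 - 1 - (S1.card + s)) (n - 1) p q) := by
    intro S1
    rw [Finset.sum_powerset_apply_card
      (fun s => q ^ S1.card * p ^ s * RW (L - 1 - 1 - (S1.card + s)) (n - 1) p q), hc2]
  rw [Finset.sum_congr rfl (fun S1 _ => hin S1),
    Finset.sum_powerset_apply_card (fun r => ∑ s ∈ Finset.range (L - 1 - k + 1),
      (L - 1 - k).choose s • (q ^ r * p ^ s * RW (L - 1 - 1 - (r + s)) (n - 1) p q)), hc1]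
  simp only [nsmul_eq_mul, Finset.mul_sum]
  set F : ℕ → ℕ → ℝ := fun r s =>
    (Nat.choose (k - 1) r : ℝ) * (Nat.choose (L - 1 - k) s : ℝ) * q ^ r * p ^ s
      * RW (L - 1 - 1 - (r + s)) (n - 1) p q with hF
  have hF0 : ∀ r s, L - 1 ≤ r + s → F r s = 0 := by
    intro r s hrs
    rcases Nat.lt_or_ge (k - 1) r with h | h
    · simp [hF, Nat.choose_eq_zero_of_lt h]
    · have : L - 1 - k < s := by omega
      simp [hF, Nat.choose_eq_zero_of_lt this]
  have stepA1 : ∑ r ∈ Finset.range (k - 1 + 1), ∑ s ∈ Finset.range (L - 1 - k + 1),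
        (Nat.choose (k - 1) r : ℝ) * ((Nat.choose (L - 1 - k) s : ℝ) *
          (q ^ r * p ^ s * RW (L - 1 - 1 - (r + s)) (n - 1) p q))
      = ∑ r ∈ Finset.range (k - 1 + 1), ∑ s ∈ Finset.range (L - 1 - k + 1), F r s := by
    refine Finset.sum_congr rfl fun r _ => Finset.sum_congr rfl fun s _ => ?_
    rw [hF]; ring
  have stepA2 : ∑ r ∈ Finset.range (k - 1 + 1), ∑ s ∈ Finset.range (L - 1 - k + 1), F r s
      = ∑ r ∈ Finset.range (L - 1), ∑ s ∈ Finset.range (L - 1), F r s := by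
    have hinner : ∀ r, ∑ s ∈ Finset.range (L - 1 - k + 1), F r s
        = ∑ s ∈ Finset.range (L - 1), F r s := by
      intro r
      refine Finset.sum_subset (Finset.range_subset_range.2 (by omega)) ?_
      intro s _ hs
      rw [Finset.mem_range] at hs
      have : L - 1 - k < s := by omega
      simp [hF, Nat.choose_eq_zero_of_lt this]
    rw [Finset.sum_congr rfl fun r _ => hinner r]
    refine Finset.sum_subset (Finset.range_subset_range.2 (by omega)) ?_
    intro r _ hr
    rw [Finset.mem_range] at hr
    have : k - 1 < r := by omega
    exact Finset.sum_eq_zero fun s _ => by simp [hF, Nat.choose_eq_zero_of_lt this]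
  rw [stepA1, stepA2, triangle_sum (L - 1) F hF0]
  have stepA4 : ∑ j ∈ Finset.range (L - 1), ∑ r ∈ Finset.range (j + 1), F r (j - r)
      = ∑ j ∈ Finset.range (L - n), ∑ r ∈ Finset.range (j + 1), F r (j - r) := by
    refine (Finset.sum_subset (Finset.range_subset_range.2 (by omega)) ?_).symm
    intro j hj hjn
    rw [Finset.mem_range] at hj hjn
    refine Finset.sum_eq_zero fun r hr => ?_
    rw [Finset.mem_range] at hr
    have hz : RW (L - 1 - 1 - (r + (j - r))) (n - 1) p q = 0 := by
      apply RW_eq_zero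
      omega
    exact mul_eq_zero_of_right _ hz
  rw [stepA4]
  refine Finset.sum_congr rfl fun j hj => Finset.sum_congr rfl fun r hr => ?_
  rw [Finset.mem_range] at hj hr
  rw [hF, R_eq_RW]
  have : L - j - 1 - 1 = L - 1 - 1 - (r + (j - r)) := by omega
  rw [this]
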